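/- Fix k ∈ ℕ, k ≥ 1, and let n ≥ k. Define P₁ = σ_{1,n} − k, P₂ = σ_{2,n} − k(k−1)/2, and P₃ = (4k−6)·σ_{3,n} − 4·σ_{4,n} − k(k−1)²(k−2)/2 in ℝ[X_1,…,X_n]. Then the common real zero set {x ∈ ℝ^n : P₁(x) = P₂(x) = P₃(x) = 0} is exactly the set of points of {0,1}^n having exactly k coordinates equal to 1; in particular it is a finite set of cardinality binom(n, k). -/

import Mathlib

open MvPolynomial Finset

private lemma my_newton_eval (n : ℕ) (x : Fin n → ℝ) (j : ℕ) (hj : 0 < j) :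
    ∑ i, x i ^ j = (-1 : ℝ)^(j+1) * j * eval x (esymm (Fin n) ℝ j)
      - ∑ a ∈ Finset.range (j+1), (if 0 < a ∧ a < j then
          (-1 : ℝ)^a * eval x (esymm (Fin n) ℝ a) * ∑ i, x i ^ (j - a) else 0) := by
  have h := congrArg (eval x) (psum_eq_mul_esymm_sub_sum (Fin n) ℝ j hj)
  simp only [psum, map_sub, map_mul, map_pow, map_sum, map_neg, map_one, map_natCast, eval_X] at h
  rw [h, Finset.sum_filter, Finset.Nat.sum_antidiagonal_eq_sum_range_succ_mk]
  simp [Set.mem_Ioo]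

private lemma my_p1_eq (n : ℕ) (x : Fin n → ℝ) :
    ∑ i, x i = eval x (esymm (Fin n) ℝ 1) := by
  simp [esymm_one]

private lemma my_p2_eq (n : ℕ) (x : Fin n → ℝ) :
    ∑ i, x i ^ 2 = eval x (esymm (Fin n) ℝ 1) * (∑ i, x i)
      - 2 * eval x (esymm (Fin n) ℝ 2) := by
  have h := my_newton_eval n x 2 (by norm_num)
  rw [Finset.sum_range_succ, Finset.sum_range_succ, Finset.sum_range_succ] at h
  norm_num at h
  rw [h, ← my_p1_eq]; ring

private lemma my_p3_eq (n : ℕ) (x : Fin n → ℝ) :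
    ∑ i, x i ^ 3 = 3 * eval x (esymm (Fin n) ℝ 3)
      + eval x (esymm (Fin n) ℝ 1) * (∑ i, x i ^ 2)
      - eval x (esymm (Fin n) ℝ 2) * (∑ i, x i) := by
  have h := my_newton_eval n x 3 (by norm_num)
  rw [Finset.sum_range_succ, Finset.sum_range_succ, Finset.sum_range_succ,
    Finset.sum_range_succ] at h
  norm_num at h
  rw [h, ← my_p1_eq]; ring

private lemma my_p4_eq (n : ℕ) (x : Fin n → ℝ) :
    ∑ i, x i ^ 4 = -4 * eval x (esymm (Fin n) ℝ 4)
      + eval x (esymm (Fin n) ℝ 1) * (∑ i, x i ^ 3)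
      - eval x (esymm (Fin n) ℝ 2) * (∑ i, x i ^ 2)
      + eval x (esymm (Fin n) ℝ 3) * (∑ i, x i) := by
  have h := my_newton_eval n x 4 (by norm_num)
  rw [Finset.sum_range_succ, Finset.sum_range_succ, Finset.sum_range_succ,
    Finset.sum_range_succ, Finset.sum_range_succ] at h
  norm_num at h
  rw [h, ← my_p1_eq]; ring

private lemma my_key (n k : ℕ) (x : Fin n → ℝ)
    (he1 : eval x (esymm (Fin n) ℝ 1) = (k:ℝ))
    (he2 : eval x (esymm (Fin n) ℝ 2) = (k:ℝ)*((k:ℝ)-1)/2) :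
    ∑ i, x i ^ 2 * (x i - 1) ^ 2
      = (4*(k:ℝ)-6) * eval x (esymm (Fin n) ℝ 3) - 4 * eval x (esymm (Fin n) ℝ 4)
        - (k:ℝ)*((k:ℝ)-1)^2*((k:ℝ)-2)/2 := by
  have p1_eq := my_p1_eq n x
  have p2_eq := my_p2_eq n x
  have p3_eq := my_p3_eq n x
  have p4_eq := my_p4_eq n x
  have hs : ∑ i, x i ^ 2 * (x i - 1) ^ 2
      = (∑ i, x i ^ 4) - 2*(∑ i, x i ^ 3) + ∑ i, x i ^ 2 := by
    rw [Finset.mul_sum, ← Finset.sum_sub_distrib, ← Finset.sum_add_distrib]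
    exact Finset.sum_congr rfl fun i _ => by ring
  simp only [he1, he2] at p1_eq p2_eq p3_eq p4_eq
  rw [hs, p4_eq, p3_eq, p2_eq, p1_eq]; ring

/-- The common zero set of `σ₁ - k`, `σ₂ - k(k-1)/2` and
`(4k-6)σ₃ - 4σ₄ - k(k-1)²(k-2)/2` in `ℝ^n` is exactly the set of 0/1-points with
exactly `k` coordinates equal to `1`; in particular it is finite of cardinality `n choose k`. -/
theorem three_polys_zero_set (k n : ℕ) (hk : 1 ≤ k) (hn : k ≤ n) :
    letI P₁ : MvPolynomial (Fin n) ℝ := esymm (Fin n) ℝ 1 - C (k : ℝ)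
    letI P₂ : MvPolynomial (Fin n) ℝ :=
      esymm (Fin n) ℝ 2 - C ((k : ℝ) * ((k : ℝ) - 1) / 2)
    letI P₃ : MvPolynomial (Fin n) ℝ :=
      C (4 * (k : ℝ) - 6) * esymm (Fin n) ℝ 3 - 4 * esymm (Fin n) ℝ 4
        - C ((k : ℝ) * ((k : ℝ) - 1) ^ 2 * ((k : ℝ) - 2) / 2)
    letI V : Set (Fin n → ℝ) := {x | eval x P₁ = 0 ∧ eval x P₂ = 0 ∧ eval x P₃ = 0}
    V = {x | (∀ i, x i = 0 ∨ x i = 1) ∧ {i | x i = 1}.ncard = k} ∧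
      V.Finite ∧ V.ncard = n.choose k := by
  classical
  have hV : {x : Fin n → ℝ |
        eval x (esymm (Fin n) ℝ 1 - C (k : ℝ)) = 0 ∧
          eval x (esymm (Fin n) ℝ 2 - C ((k : ℝ) * ((k : ℝ) - 1) / 2)) = 0 ∧
            eval x (C (4 * (k : ℝ) - 6) * esymm (Fin n) ℝ 3 - 4 * esymm (Fin n) ℝ 4
              - C ((k : ℝ) * ((k : ℝ) - 1) ^ 2 * ((k : ℝ) - 2) / 2)) = 0}
      = {x | (∀ i, x i = 0 ∨ x i = 1) ∧ {i | x i = 1}.ncard = k} := by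
    ext x
    simp only [Set.mem_setOf_eq, map_sub, map_mul, eval_C, map_ofNat,
      sub_eq_zero]
    constructor
    · rintro ⟨h1, h2, h3⟩
      have hzero : ∑ i, x i ^ 2 * (x i - 1) ^ 2 = 0 := by
        rw [my_key n k x h1 h2]
        linarith [h3]
      have hterm : ∀ i ∈ Finset.univ, x i ^ 2 * (x i - 1) ^ 2 = 0 :=
        (Finset.sum_eq_zero_iff_of_nonneg (fun i _ => by positivity)).1 hzero
      have h01 : ∀ i, x i = 0 ∨ x i = 1 := by
        intro i
        rcases mul_eq_zero.1 (hterm i (Finset.mem_univ i)) with h | h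
        · exact Or.inl (by simpa using pow_eq_zero_iff (n := 2) (by norm_num) |>.1 h)
        · exact Or.inr (by have := pow_eq_zero_iff (n := 2) (by norm_num) |>.1 h; linarith)
      refine ⟨h01, ?_⟩
      set s : Finset (Fin n) := Finset.univ.filter (fun i => x i = 1) with hs
      have hsum : ∑ i, x i = (s.card : ℝ) := by
        rw [← Finset.sum_filter_add_sum_filter_not Finset.univ (fun i => x i = 1)]
        have h1s : ∑ i ∈ s, x i = (s.card : ℝ) := by
          rw [Finset.sum_congr rfl (fun i hi => (Finset.mem_filter.1 hi).2)]
          simp [hs]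
        have h0s : ∑ i ∈ Finset.univ.filter (fun i => ¬ x i = 1), x i = 0 := by
          refine Finset.sum_eq_zero fun i hi => ?_
          rcases h01 i with h | h
          · exact h
          · exact absurd h (Finset.mem_filter.1 hi).2
        rw [h1s, h0s, add_zero]
      have hk' : (s.card : ℝ) = (k : ℝ) := by
        rw [← hsum, my_p1_eq, h1]
      have hcard : s.card = k := Nat.cast_injective hk'
      have hset : {i | x i = 1} = ↑s := by
        ext i; simp [hs]
      rw [hset, Set.ncard_coe_finset, hcard]
    · rintro ⟨h01, hcard⟩
      set s : Finset (Fin n) := Finset.univ.filter (fun i => x i = 1) with hs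
      have hset : {i | x i = 1} = ↑s := by ext i; simp [hs]
      have hscard : s.card = k := by
        rw [hset, Set.ncard_coe_finset] at hcard; exact hcard
      have hp1 : ∑ i, x i = (k : ℝ) := by
        rw [← Finset.sum_filter_add_sum_filter_not Finset.univ (fun i => x i = 1)]
        have h1s : ∑ i ∈ s, x i = (s.card : ℝ) := by
          rw [Finset.sum_congr rfl (fun i hi => (Finset.mem_filter.1 hi).2)]
          simp [hs]
        have h0s : ∑ i ∈ Finset.univ.filter (fun i => ¬ x i = 1), x i = 0 := by
          refine Finset.sum_eq_zero fun i hi => ?_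
          rcases h01 i with h | h
          · exact h
          · exact absurd h (Finset.mem_filter.1 hi).2
        rw [h1s, h0s, add_zero, hscard]
      have hpow : ∀ j : ℕ, j ≠ 0 → ∑ i, x i ^ j = ∑ i, x i := by
        intro j hj
        refine Finset.sum_congr rfl fun i _ => ?_
        rcases h01 i with h | h <;> simp [h, zero_pow hj]
      have he1 : eval x (esymm (Fin n) ℝ 1) = (k : ℝ) := by
        rw [← my_p1_eq, hp1]
      have hp2 : ∑ i, x i ^ 2 = (k : ℝ) := by rw [hpow 2 (by norm_num), hp1]
      have he2 : eval x (esymm (Fin n) ℝ 2) = (k:ℝ)*((k:ℝ)-1)/2 := by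
        have := my_p2_eq n x
        rw [hp2, he1, hp1] at this
        linarith
      refine ⟨he1, he2, ?_⟩
      have hz : ∑ i, x i ^ 2 * (x i - 1) ^ 2 = 0 := by
        refine Finset.sum_eq_zero fun i _ => ?_
        rcases h01 i with h | h <;> simp [h]
      have hkey := my_key n k x he1 he2
      rw [hz] at hkey
      linarith
  have hFS : {x : Fin n → ℝ | (∀ i, x i = 0 ∨ x i = 1) ∧ {i | x i = 1}.ncard = k}
        = ↑((Finset.powersetCard k (Finset.univ : Finset (Fin n))).image
            (fun s i => if i ∈ s then (1:ℝ) else 0)) := by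
      ext x
      simp only [Set.mem_setOf_eq, Finset.coe_image, Set.mem_image, Finset.mem_coe,
        Finset.mem_powersetCard]
      constructor
      · rintro ⟨h01, hcard⟩
        refine ⟨Finset.univ.filter (fun i => x i = 1), ⟨Finset.subset_univ _, ?_⟩, ?_⟩
        · have hset : {i | x i = 1} = ↑(Finset.univ.filter (fun i => x i = 1)) := by
            ext i; simp
          rw [hset, Set.ncard_coe_finset] at hcard; exact hcard
        · funext i
          rcases h01 i with h | h <;> simp [h]
      · rintro ⟨s, ⟨-, hcard⟩, rfl⟩
        constructor
        · intro i; by_cases h : i ∈ s <;> simp [h]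
        · have hset : {i | (if i ∈ s then (1:ℝ) else 0) = 1} = ↑s := by
            ext i; by_cases h : i ∈ s <;> simp [h]
          rw [hset, Set.ncard_coe_finset, hcard]
  refine ⟨hV, ?_, ?_⟩ <;> rw [hV, hFS]
  · exact Finset.finite_toSet _
  · rw [Set.ncard_coe_finset, Finset.card_image_of_injective _ ?_,
      Finset.card_powersetCard, Finset.card_univ, Fintype.card_fin]
    intro s t h
    ext i
    have := congrFun h i
    by_cases h1 : i ∈ s <;> by_cases h2 : i ∈ t <;> simp_all
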